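/- Let A, B be symmetric d×d matrices with B positive definite. Given an orthonormal P_j ∈ ℝ^{d×p}, define q_j = tr(P_jᵀ A P_j)/tr(P_jᵀ B P_j) and let P_{j+1} be an orthonormal eigenbasis for the p largest eigenvalues of H_j = A − q_j B. Then the SCF iteration is monotonic: q_{j+1} = tr(P_{j+1}ᵀ A P_{j+1})/tr(P_{j+1}ᵀ B P_{j+1}) ≥ q_j. -/

import Mathlib

open Matrix

lemma aux_trace_pos {d p : ℕ} (hp : 0 < p) (B : Matrix (Fin d) (Fin d) ℝ) (hB : B.PosDef)
    (P : Matrix (Fin d) (Fin p) ℝ) (hP : Pᵀ * P = 1) : 0 < (Pᵀ * B * P).trace := by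
  have h : ∀ j : Fin p, (Pᵀ * B * P) j j = (fun k => P k j) ⬝ᵥ (B *ᵥ fun k => P k j) := by
    intro j
    simp only [Matrix.mul_apply, Matrix.transpose_apply, dotProduct, Matrix.mulVec,
      Finset.sum_mul, Finset.mul_sum]
    rw [Finset.sum_comm]
    apply Finset.sum_congr rfl; intro k _
    apply Finset.sum_congr rfl; intro l _
    ring
  rw [Matrix.trace]
  apply Finset.sum_pos
  · intro j _
    rw [Matrix.diag_apply, h j]
    have hx : (fun k => P k j) ≠ 0 := by
      intro h0
      have := congrFun (congrFun hP j) j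
      simp [Matrix.mul_apply, Matrix.one_apply] at this
      rw [funext_iff] at h0
      simp only [Pi.zero_apply] at h0
      simp [h0] at this
    have := hB.dotProduct_mulVec_pos hx
    simpa using this
  · exact Finset.univ_nonempty_iff.mpr ⟨⟨0, hp⟩⟩

lemma aux_expand {d p : ℕ} (A B : Matrix (Fin d) (Fin d) ℝ) (q : ℝ)
    (P : Matrix (Fin d) (Fin p) ℝ) :
    (Pᵀ * (A - q • B) * P).trace = (Pᵀ * A * P).trace - q * (Pᵀ * B * P).trace := by
  rw [Matrix.mul_sub, Matrix.sub_mul, Matrix.mul_smul, Matrix.smul_mul, trace_sub, trace_smul,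
    smul_eq_mul]

lemma aux_sum_ite {d p : ℕ} (hp : p ≤ d) (f : ℕ → ℝ) :
    ∑ k : Fin d, (if (k : ℕ) < p then f k else 0) = ∑ i : Fin p, f i := by
  rw [Fin.sum_univ_eq_sum_range (fun i => if i < p then f i else 0) d,
    Fin.sum_univ_eq_sum_range f p, ← Finset.sum_filter]
  congr 1
  ext a
  simp only [Finset.mem_filter, Finset.mem_range]
  omega

lemma aux_key {d p : ℕ} (hp : p ≤ d) (hp0 : 0 < p) (μ : Fin d → ℝ) (hμ : Antitone μ)
    (w : Fin d → ℝ) (hw0 : ∀ k, 0 ≤ w k) (hw1 : ∀ k, w k ≤ 1) (hsum : ∑ k, w k = p) :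
    ∑ k, μ k * w k ≤ ∑ i : Fin p, μ (Fin.castLE hp i) := by
  set i0 : Fin d := ⟨p - 1, by omega⟩ with hi0
  set t : ℝ := μ i0 with ht
  have step : ∑ k, (μ k - t) * w k ≤ ∑ k : Fin d, (if (k : ℕ) < p then μ k - t else 0) := by
    apply Finset.sum_le_sum
    intro k _
    by_cases hk : (k : ℕ) < p
    · rw [if_pos hk]
      have hμk : t ≤ μ k := hμ (show k ≤ i0 by rw [Fin.le_def]; simp [hi0]; omega)
      calc (μ k - t) * w k ≤ (μ k - t) * 1 := by
            apply mul_le_mul_of_nonneg_left (hw1 k) (by linarith)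
        _ = μ k - t := mul_one _
    · rw [if_neg hk]
      have hμk : μ k ≤ t := hμ (show i0 ≤ k by rw [Fin.le_def]; simp [hi0]; omega)
      exact mul_nonpos_of_nonpos_of_nonneg (by linarith) (hw0 k)
  have hrw : ∑ k : Fin d, (if (k : ℕ) < p then μ k - t else 0)
      = ∑ i : Fin p, (μ (Fin.castLE hp i) - t) := by
    have := aux_sum_ite hp (fun n => if h : n < d then μ ⟨n, h⟩ - t else 0)
    calc ∑ k : Fin d, (if (k : ℕ) < p then μ k - t else 0)
        = ∑ k : Fin d, (if (k : ℕ) < p then (if h : (k:ℕ) < d then μ ⟨k, h⟩ - t else 0) else 0) := by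
          apply Finset.sum_congr rfl; intro k _
          simp [k.isLt]
      _ = ∑ i : Fin p, (if h : (i:ℕ) < d then μ ⟨i, h⟩ - t else 0) := this
      _ = ∑ i : Fin p, (μ (Fin.castLE hp i) - t) := by
          apply Finset.sum_congr rfl; intro i _
          rw [dif_pos (lt_of_lt_of_le i.isLt hp)]
          rfl
  have expand : ∑ k, μ k * w k = (∑ k, (μ k - t) * w k) + t * (p : ℝ) := by
    rw [← hsum, Finset.mul_sum, ← Finset.sum_add_distrib]
    apply Finset.sum_congr rfl; intro k _; ring
  have expand2 : ∑ i : Fin p, μ (Fin.castLE hp i)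
      = (∑ i : Fin p, (μ (Fin.castLE hp i) - t)) + t * (p : ℝ) := by
    rw [Finset.sum_sub_distrib]
    simp [mul_comm]
  rw [expand, expand2]
  rw [hrw] at step
  linarith

/-- Monotonicity of the SCF iteration for the trace ratio optimization: if
`P_{j+1}` is an orthonormal eigenbasis for the `p` largest eigenvalues of
`H_j = A − q_j B`, where `q_j = tr(P_jᵀAP_j)/tr(P_jᵀBP_j)`, then
`q_{j+1} ≥ q_j`. The eigenbasis is expressed via an eigendecomposition
`H_j = V D(μ) Vᵀ` with `V` orthogonal, `μ` decreasing, and `P_{j+1}` the first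
`p` columns of `V`. -/
theorem scf_trace_ratio_monotonic
    (d p : ℕ) (hp : p ≤ d)
    (A B : Matrix (Fin d) (Fin d) ℝ)
    (hA : Aᵀ = A) (hB : B.PosDef)
    (Pj : Matrix (Fin d) (Fin p) ℝ) (hPj : Pjᵀ * Pj = 1)
    (qj : ℝ) (hqj : qj = (Pjᵀ * A * Pj).trace / (Pjᵀ * B * Pj).trace)
    (Hj : Matrix (Fin d) (Fin d) ℝ) (hHj : Hj = A - qj • B)
    (V : Matrix (Fin d) (Fin d) ℝ) (μ : Fin d → ℝ)
    (hV : Vᵀ * V = 1) (hμ : Antitone μ)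
    (hdec : Hj = V * Matrix.diagonal μ * Vᵀ)
    (Pnext : Matrix (Fin d) (Fin p) ℝ)
    (hPnext : Pnext = Matrix.of fun i j => V i (Fin.castLE hp j)) :
    qj ≤ (Pnextᵀ * A * Pnext).trace / (Pnextᵀ * B * Pnext).trace := by
  rcases Nat.eq_zero_or_pos p with hp0 | hp0
  · subst hp0
    simp [hqj, Matrix.trace]
  have hVV : V * Vᵀ = 1 := mul_eq_one_comm.mp hV
  obtain ⟨Q, hQdef⟩ : ∃ Q, Q = Vᵀ * Pj := ⟨_, rfl⟩
  have hQ : Qᵀ * Q = 1 := by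
    rw [hQdef, Matrix.transpose_mul, Matrix.transpose_transpose, Matrix.mul_assoc,
      ← Matrix.mul_assoc V, hVV, Matrix.one_mul, hPj]
  obtain ⟨M, hMdef⟩ : ∃ M, M = Q * Qᵀ := ⟨_, rfl⟩
  have hMsymm : Mᵀ = M := by
    rw [hMdef, Matrix.transpose_mul, Matrix.transpose_transpose]
  have hMidem : M * M = M := by
    rw [hMdef, Matrix.mul_assoc, ← Matrix.mul_assoc Qᵀ, hQ, Matrix.one_mul]
  obtain ⟨w, hwdef⟩ : ∃ w : Fin d → ℝ, w = fun k => M k k := ⟨_, rfl⟩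
  have hw0 : ∀ k, 0 ≤ w k := by
    intro k
    rw [hwdef]
    simp only [hMdef, Matrix.mul_apply, Matrix.transpose_apply]
    exact Finset.sum_nonneg fun j _ => mul_self_nonneg _
  have hw1 : ∀ k, w k ≤ 1 := by
    intro k
    have hproj : (1 : Matrix (Fin d) (Fin d) ℝ) - M = (1 - M)ᵀ * (1 - M) := by
      rw [Matrix.transpose_sub, Matrix.transpose_one, hMsymm]
      have : ((1 : Matrix (Fin d) (Fin d) ℝ) - M) * (1 - M) = 1 - M - M + M * M := by
        noncomm_ring
      rw [this, hMidem]
      abel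
    have h1 : 0 ≤ ((1 : Matrix (Fin d) (Fin d) ℝ) - M) k k := by
      rw [hproj]
      simp only [Matrix.mul_apply, Matrix.transpose_apply]
      exact Finset.sum_nonneg fun j _ => mul_self_nonneg _
    have h2 : ((1 : Matrix (Fin d) (Fin d) ℝ) - M) k k = 1 - w k := by
      simp [Matrix.one_apply, hwdef, Matrix.sub_apply]
    linarith
  have hwsum : ∑ k, w k = (p : ℝ) := by
    have h1 : ∑ k, w k = M.trace := by rw [hwdef]; rfl
    rw [h1, hMdef, Matrix.trace_mul_comm, hQ, Matrix.trace_one]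
    simp
  have htrPj : (Pjᵀ * Hj * Pj).trace = ∑ k, μ k * w k := by
    have h1 : Pjᵀ * Hj * Pj = Qᵀ * Matrix.diagonal μ * Q := by
      rw [hdec, hQdef, Matrix.transpose_mul, Matrix.transpose_transpose]
      simp only [Matrix.mul_assoc]
    rw [h1, Matrix.trace_mul_cycle, ← hMdef]
    simp only [Matrix.trace, Matrix.diag_apply, Matrix.mul_diagonal, hwdef]
    exact Finset.sum_congr rfl fun k _ => mul_comm _ _
  have hb : 0 < (Pjᵀ * B * Pj).trace := aux_trace_pos hp0 B hB Pj hPj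
  have hzero : (Pjᵀ * Hj * Pj).trace = 0 := by
    rw [hHj, aux_expand, hqj]
    field_simp
    ring
  have hPnextO : Pnextᵀ * Pnext = 1 := by
    ext i j
    have h := congrFun (congrFun hV (Fin.castLE hp i)) (Fin.castLE hp j)
    simp only [Matrix.mul_apply, Matrix.transpose_apply, Matrix.one_apply] at h ⊢
    rw [hPnext]
    simp only [Matrix.of_apply]
    rw [h]
    simp [Fin.castLE_inj]
  have hR : Vᵀ * Pnext = Matrix.of (fun k j => if k = Fin.castLE hp j then (1:ℝ) else 0) := by
    ext k j
    have h := congrFun (congrFun hV k) (Fin.castLE hp j)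
    simp only [Matrix.mul_apply, Matrix.transpose_apply, Matrix.one_apply] at h
    rw [hPnext]
    simp only [Matrix.mul_apply, Matrix.transpose_apply, Matrix.of_apply]
    exact h
  have htrPnext : (Pnextᵀ * Hj * Pnext).trace = ∑ i : Fin p, μ (Fin.castLE hp i) := by
    have h1 : Pnextᵀ * Hj * Pnext = (Vᵀ * Pnext)ᵀ * Matrix.diagonal μ * (Vᵀ * Pnext) := by
      rw [hdec, Matrix.transpose_mul, Matrix.transpose_transpose]
      simp only [Matrix.mul_assoc]
    rw [h1, hR]
    simp only [Matrix.trace, Matrix.diag_apply, Matrix.mul_apply, Matrix.transpose_apply,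
      Matrix.diagonal_apply, Matrix.of_apply, ite_mul, one_mul, zero_mul, mul_ite, mul_one,
      mul_zero, Finset.sum_ite_eq, Finset.sum_ite_eq', Finset.mem_univ, if_true]
  have hbn : 0 < (Pnextᵀ * B * Pnext).trace := aux_trace_pos hp0 B hB Pnext hPnextO
  have hkey := aux_key hp hp0 μ hμ w hw0 hw1 hwsum
  have hexp : (Pnextᵀ * Hj * Pnext).trace
      = (Pnextᵀ * A * Pnext).trace - qj * (Pnextᵀ * B * Pnext).trace := by
    rw [hHj, aux_expand]
  rw [le_div_iff₀ hbn]
  have h0 : ∑ k, μ k * w k = 0 := by rw [← htrPj, hzero]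
  rw [hexp] at htrPnext
  linarith
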